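/- arXiv:1609.06641 — 3 statements merged into one kernel-verified Lean document; each statement's English description precedes it below -/
import Mathlib

section
/- For all m ≥ 1, the dyadic-ordered Hadamard matrix satisfies H_m = (∏_{r=1}^{m-1} I_{r-1} ⊗ [[I_{m-r}, 0], [0, Ψ_{m-r}]]) · Ψ_m, where the product is taken as M_{m-1}···M_2·M_1. -/
open Matrix

/-- The `2^m × 2^m` dyadic (Paley) ordered Hadamard matrix:
`H_0 = (1)`, `H_{m+1} = (1/√2)·[H_m ⊗ (1 1); H_m ⊗ (1 −1)]`. -/
noncomputable def Had : (m : ℕ) → Matrix (Fin (2 ^ m)) (Fin (2 ^ m)) ℝ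
  | 0 => fun _ _ => 1
  | m + 1 => fun i j =>
      (1 / Real.sqrt 2) *
        (if h : (i : ℕ) < 2 ^ m then
            Had m ⟨i, h⟩ ⟨(j : ℕ) / 2, by have := j.isLt; have h2 : (2:ℕ)^(m+1) = 2^m*2 := pow_succ 2 m; omega⟩
          else
            Had m ⟨(i : ℕ) - 2 ^ m, by have := i.isLt; have h2 : (2:ℕ)^(m+1) = 2^m*2 := pow_succ 2 m; omega⟩
                ⟨(j : ℕ) / 2, by have := j.isLt; have h2 : (2:ℕ)^(m+1) = 2^m*2 := pow_succ 2 m; omega⟩ *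
              (if (j : ℕ) % 2 = 0 then 1 else -1))

/-- The `2^m × 2^m` Haar matrix:
`Ψ_0 = (1)`, `Ψ_{m+1} = (1/√2)·[Ψ_m ⊗ (1 1); I_m ⊗ (1 −1)]`. -/
noncomputable def Haar : (m : ℕ) → Matrix (Fin (2 ^ m)) (Fin (2 ^ m)) ℝ
  | 0 => fun _ _ => 1
  | m + 1 => fun i j =>
      (1 / Real.sqrt 2) *
        (if h : (i : ℕ) < 2 ^ m then
            Haar m ⟨i, h⟩ ⟨(j : ℕ) / 2, by have := j.isLt; have h2 : (2:ℕ)^(m+1) = 2^m*2 := pow_succ 2 m; omega⟩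
          else
            (if (i : ℕ) - 2 ^ m = (j : ℕ) / 2 then 1 else 0) *
              (if (j : ℕ) % 2 = 0 then 1 else -1))

/-- The block matrix `[[I_k, 0], [0, Ψ_k]]` of size `2^(k+1)`. -/
noncomputable def idBlockHaar (k : ℕ) : Matrix (Fin (2 ^ (k + 1))) (Fin (2 ^ (k + 1))) ℝ :=
  fun a b =>
    if (a : ℕ) < 2 ^ k then (if (a : ℕ) = (b : ℕ) then 1 else 0)
    else if (b : ℕ) < 2 ^ k then 0
    else
      Haar k ⟨(a : ℕ) - 2 ^ k, by have := a.isLt; have h2 : (2:ℕ)^(k+1) = 2^k*2 := pow_succ 2 k; omega⟩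
             ⟨(b : ℕ) - 2 ^ k, by have := b.isLt; have h2 : (2:ℕ)^(k+1) = 2^k*2 := pow_succ 2 k; omega⟩

/-- The factor `I_{r-1} ⊗ [[I_{m-r}, 0], [0, Ψ_{m-r}]]` of the CHW decomposition, viewed as a
`2^m × 2^m` matrix: a block-diagonal matrix with `2^(r-1)` copies of `[[I_{m-r},0],[0,Ψ_{m-r}]]`
(each of size `2^(m-r+1)`) along the diagonal. -/
noncomputable def chwFactor (m r : ℕ) : Matrix (Fin (2 ^ m)) (Fin (2 ^ m)) ℝ :=
  fun i j =>
    if (i : ℕ) / 2 ^ (m - r + 1) = (j : ℕ) / 2 ^ (m - r + 1) then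
      idBlockHaar (m - r)
        ⟨(i : ℕ) % 2 ^ (m - r + 1), Nat.mod_lt _ (Nat.pow_pos (by norm_num))⟩
        ⟨(j : ℕ) % 2 ^ (m - r + 1), Nat.mod_lt _ (Nat.pow_pos (by norm_num))⟩
    else 0

section Helpers

lemma two_pow_succ (m : ℕ) : (2:ℕ)^(m+1) = 2^m + 2^m := by rw [pow_succ]; ring

def loF (m : ℕ) (k : Fin (2^m)) : Fin (2^(m+1)) :=
  ⟨k, by have := k.isLt; have := two_pow_succ m; omega⟩
def hiF (m : ℕ) (k : Fin (2^m)) : Fin (2^(m+1)) :=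
  ⟨(k:ℕ) + 2^m, by have := k.isLt; have := two_pow_succ m; omega⟩

@[simp] lemma loF_val (m : ℕ) (k : Fin (2^m)) : (loF m k : ℕ) = k := rfl
@[simp] lemma hiF_val (m : ℕ) (k : Fin (2^m)) : (hiF m k : ℕ) = (k:ℕ) + 2^m := rfl

lemma lo_or_hi (m : ℕ) (i : Fin (2^(m+1))) :
    (∃ a, i = loF m a) ∨ (∃ a, i = hiF m a) := by
  have h1 := i.isLt; have h2 := two_pow_succ m
  by_cases h : (i:ℕ) < 2^m
  · exact Or.inl ⟨⟨i, h⟩, by ext; simp [loF]⟩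
  · exact Or.inr ⟨⟨(i:ℕ) - 2^m, by omega⟩, by ext; simp [hiF]; omega⟩

lemma sum_split (m : ℕ) (f : Fin (2^(m+1)) → ℝ) :
    ∑ k, f k = (∑ k : Fin (2^m), f (loF m k)) + ∑ k : Fin (2^m), f (hiF m k) := by
  have h : (2:ℕ)^(m+1) = 2^m + 2^m := two_pow_succ m
  rw [Fintype.sum_equiv (finCongr h) f (fun k => f (finCongr h.symm k))
    (fun x => by simp)]
  rw [Fin.sum_univ_add]
  congr 1
  all_goals
    apply Finset.sum_congr rfl
    intro k _
    congr 1
    ext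
    simp [Fin.natAdd, loF, hiF, add_comm]

noncomputable def blockDiag2 {m : ℕ} (A B : Matrix (Fin (2^m)) (Fin (2^m)) ℝ) :
    Matrix (Fin (2^(m+1))) (Fin (2^(m+1))) ℝ :=
  fun i j =>
    if hi : (i:ℕ) < 2^m then
      if hj : (j:ℕ) < 2^m then A ⟨i, hi⟩ ⟨j, hj⟩ else 0
    else if (j:ℕ) < 2^m then 0
    else B ⟨(i:ℕ) - 2^m, by have := i.isLt; have := two_pow_succ m; omega⟩
           ⟨(j:ℕ) - 2^m, by have := j.isLt; have := two_pow_succ m; omega⟩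

@[simp] lemma blockDiag2_lo_lo {m : ℕ} (A B : Matrix (Fin (2^m)) (Fin (2^m)) ℝ)
    (a b : Fin (2^m)) : blockDiag2 A B (loF m a) (loF m b) = A a b := by
  simp [blockDiag2, a.isLt, b.isLt]

@[simp] lemma blockDiag2_lo_hi {m : ℕ} (A B : Matrix (Fin (2^m)) (Fin (2^m)) ℝ)
    (a b : Fin (2^m)) : blockDiag2 A B (loF m a) (hiF m b) = 0 := by
  have : ¬ ((b:ℕ) + 2^m < 2^m) := by omega
  simp [blockDiag2, a.isLt, this]

@[simp] lemma blockDiag2_hi_lo {m : ℕ} (A B : Matrix (Fin (2^m)) (Fin (2^m)) ℝ)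
    (a b : Fin (2^m)) : blockDiag2 A B (hiF m a) (loF m b) = 0 := by
  have : ¬ ((a:ℕ) + 2^m < 2^m) := by omega
  simp [blockDiag2, b.isLt, this]

@[simp] lemma blockDiag2_hi_hi {m : ℕ} (A B : Matrix (Fin (2^m)) (Fin (2^m)) ℝ)
    (a b : Fin (2^m)) : blockDiag2 A B (hiF m a) (hiF m b) = B a b := by
  have ha : ¬ ((a:ℕ) + 2^m < 2^m) := by omega
  have hb : ¬ ((b:ℕ) + 2^m < 2^m) := by omega
  simp only [blockDiag2, hiF_val, ha, hb, dif_neg, if_neg, Nat.add_sub_cancel, Fin.eta]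
  simp

lemma blockDiag2_one {m : ℕ} : blockDiag2 (m := m) 1 1 = 1 := by
  funext i j
  rcases lo_or_hi m i with ⟨a, rfl⟩ | ⟨a, rfl⟩ <;>
    rcases lo_or_hi m j with ⟨b, rfl⟩ | ⟨b, rfl⟩
  · simp [Matrix.one_apply, Fin.ext_iff]
  · have hab : (a:ℕ) ≠ (b:ℕ) + 2^m := by have := a.isLt; omega
    simp [Matrix.one_apply, Fin.ext_iff, hab]
  · have hab : (a:ℕ) + 2^m ≠ (b:ℕ) := by have := b.isLt; omega
    simp [Matrix.one_apply, Fin.ext_iff, hab]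
  · simp [Matrix.one_apply, Fin.ext_iff]

lemma blockDiag2_mul {m : ℕ} (A B C D : Matrix (Fin (2^m)) (Fin (2^m)) ℝ) :
    blockDiag2 A B * blockDiag2 C D = blockDiag2 (A * C) (B * D) := by
  funext i j
  rcases lo_or_hi m i with ⟨a, rfl⟩ | ⟨a, rfl⟩ <;>
    rcases lo_or_hi m j with ⟨b, rfl⟩ | ⟨b, rfl⟩ <;>
  · rw [Matrix.mul_apply, sum_split m]
    simp [Matrix.mul_apply]

end Helpers
section HH

lemma jdiv_lt (m : ℕ) (j : Fin (2^(m+1))) : (j:ℕ)/2 < 2^m := by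
  have := j.isLt; have := two_pow_succ m; omega

lemma Haar_succ_lo (m : ℕ) (k : Fin (2^m)) (j : Fin (2^(m+1))) :
    Haar (m+1) (loF m k) j = (1 / Real.sqrt 2) * Haar m k ⟨(j:ℕ)/2, jdiv_lt m j⟩ := by
  have hk : ((loF m k : Fin (2^(m+1))) : ℕ) < 2^m := k.isLt
  rw [Haar]
  beta_reduce
  rw [dif_pos hk]
  congr 2 <;> ext <;> simp

lemma Haar_succ_hi (m : ℕ) (k : Fin (2^m)) (j : Fin (2^(m+1))) :
    Haar (m+1) (hiF m k) j = (1 / Real.sqrt 2) *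
      ((if (k:ℕ) = (j:ℕ)/2 then 1 else 0) * (if (j:ℕ)%2 = 0 then 1 else -1)) := by
  have hk : ¬ ((hiF m k : Fin (2^(m+1))) : ℕ) < 2^m := by simp
  rw [Haar]
  beta_reduce
  rw [dif_neg hk]
  simp

lemma Had_succ_lo (m : ℕ) (k : Fin (2^m)) (j : Fin (2^(m+1))) :
    Had (m+1) (loF m k) j = (1 / Real.sqrt 2) * Had m k ⟨(j:ℕ)/2, jdiv_lt m j⟩ := by
  have hk : ((loF m k : Fin (2^(m+1))) : ℕ) < 2^m := k.isLt
  rw [Had]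
  beta_reduce
  rw [dif_pos hk]
  congr 2 <;> ext <;> simp

lemma Had_succ_hi (m : ℕ) (k : Fin (2^m)) (j : Fin (2^(m+1))) :
    Had (m+1) (hiF m k) j = (1 / Real.sqrt 2) *
      (Had m k ⟨(j:ℕ)/2, jdiv_lt m j⟩ * (if (j:ℕ)%2 = 0 then 1 else -1)) := by
  have hk : ¬ ((hiF m k : Fin (2^(m+1))) : ℕ) < 2^m := by simp
  rw [Had]
  beta_reduce
  rw [dif_neg hk]
  congr 3 <;> ext <;> simp

lemma mul_haar_lo {m : ℕ} (A B : Matrix (Fin (2^m)) (Fin (2^m)) ℝ)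
    (a : Fin (2^m)) (j : Fin (2^(m+1))) :
    (blockDiag2 A B * Haar (m+1)) (loF m a) j =
      (1 / Real.sqrt 2) * (A * Haar m) a ⟨(j:ℕ)/2, jdiv_lt m j⟩ := by
  rw [Matrix.mul_apply, sum_split m]
  simp only [blockDiag2_lo_lo, blockDiag2_lo_hi, zero_mul, Finset.sum_const_zero, add_zero,
    Haar_succ_lo]
  rw [Matrix.mul_apply, Finset.mul_sum]
  apply Finset.sum_congr rfl
  intro k _
  ring

lemma mul_haar_hi {m : ℕ} (A B : Matrix (Fin (2^m)) (Fin (2^m)) ℝ)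
    (a : Fin (2^m)) (j : Fin (2^(m+1))) :
    (blockDiag2 A B * Haar (m+1)) (hiF m a) j =
      (1 / Real.sqrt 2) * (B a ⟨(j:ℕ)/2, jdiv_lt m j⟩ * (if (j:ℕ)%2 = 0 then 1 else -1)) := by
  rw [Matrix.mul_apply, sum_split m]
  simp only [blockDiag2_hi_lo, blockDiag2_hi_hi, zero_mul, Finset.sum_const_zero, zero_add,
    Haar_succ_hi]
  have key : ∀ k : Fin (2^m),
      B a k * ((1 / Real.sqrt 2) * ((if (k:ℕ) = (j:ℕ)/2 then (1:ℝ) else 0)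
        * (if (j:ℕ)%2 = 0 then 1 else -1))) =
      if k = (⟨(j:ℕ)/2, jdiv_lt m j⟩ : Fin (2^m)) then
        (1 / Real.sqrt 2) * (B a k * (if (j:ℕ)%2 = 0 then 1 else -1)) else 0 := by
    intro k
    by_cases h : k = (⟨(j:ℕ)/2, jdiv_lt m j⟩ : Fin (2^m))
    · have h' : (k:ℕ) = (j:ℕ)/2 := by rw [h]
      simp [h, h']
      ring
    · have h' : ¬ (k:ℕ) = (j:ℕ)/2 := by
        intro hc; exact h (by ext; simpa using hc)
      simp [h, h']
  rw [Finset.sum_congr rfl (fun k _ => key k)]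
  rw [Finset.sum_ite_eq' Finset.univ]
  simp

end HH
section CHW

lemma idBlockHaar_eq (m : ℕ) : idBlockHaar m = blockDiag2 1 (Haar m) := by
  funext i j
  rcases lo_or_hi m i with ⟨a, rfl⟩ | ⟨a, rfl⟩ <;>
    rcases lo_or_hi m j with ⟨b, rfl⟩ | ⟨b, rfl⟩
  · simp [idBlockHaar, a.isLt, Matrix.one_apply, Fin.ext_iff]
    rfl
  · have h : (a:ℕ) ≠ (b:ℕ) + 2^m := by have := a.isLt; omega
    simp [idBlockHaar, a.isLt, h]
  · have h : ¬ ((a:ℕ) + 2^m < 2^m) := by omega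
    simp [idBlockHaar, h, b.isLt]
  · have h : ¬ ((a:ℕ) + 2^m < 2^m) := by omega
    have h' : ¬ ((b:ℕ) + 2^m < 2^m) := by omega
    simp [idBlockHaar, h, h']

noncomputable def chwAux (m s : ℕ) : Matrix (Fin (2 ^ m)) (Fin (2 ^ m)) ℝ :=
  fun i j =>
    if (i : ℕ) / 2 ^ (s + 1) = (j : ℕ) / 2 ^ (s + 1) then
      idBlockHaar s
        ⟨(i : ℕ) % 2 ^ (s + 1), Nat.mod_lt _ (Nat.pow_pos (by norm_num))⟩
        ⟨(j : ℕ) % 2 ^ (s + 1), Nat.mod_lt _ (Nat.pow_pos (by norm_num))⟩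
    else 0

lemma chwFactor_eq_aux (m r : ℕ) : chwFactor m r = chwAux m (m - r) := rfl

lemma chwFactor_one (m : ℕ) : chwFactor (m+1) 1 = idBlockHaar m := by
  rw [chwFactor_eq_aux]
  show chwAux (m+1) m = idBlockHaar m
  funext i j
  have hi := i.isLt; have hj := j.isLt
  simp only [chwAux, Nat.div_eq_of_lt hi, Nat.div_eq_of_lt hj, if_true,
    Nat.mod_eq_of_lt hi, Nat.mod_eq_of_lt hj, Fin.eta]

lemma dup_chwAux (m s : ℕ) (hs : s + 1 ≤ m) :
    blockDiag2 (chwAux m s) (chwAux m s) = chwAux (m+1) s := by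
  have hdvd : (2:ℕ)^(s+1) ∣ 2^m := pow_dvd_pow 2 hs
  obtain ⟨c, hc⟩ := hdvd
  have hBpos : (0:ℕ) < 2^(s+1) := Nat.pow_pos (by norm_num)
  funext i j
  rcases lo_or_hi m i with ⟨a, rfl⟩ | ⟨a, rfl⟩ <;>
    rcases lo_or_hi m j with ⟨b, rfl⟩ | ⟨b, rfl⟩
  · rw [blockDiag2_lo_lo]
    simp only [chwAux, loF_val]
    rfl
  · rw [blockDiag2_lo_hi]
    have hlt : (a:ℕ) / 2^(s+1) < 2^m / 2^(s+1) :=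
      Nat.div_lt_div_of_lt_of_dvd ⟨c, hc⟩ a.isLt
    have hge : 2^m / 2^(s+1) ≤ ((b:ℕ) + 2^m) / 2^(s+1) :=
      Nat.div_le_div_right (by omega)
    have hne : (a:ℕ) / 2^(s+1) ≠ ((b:ℕ) + 2^m) / 2^(s+1) := by omega
    simp only [chwAux, loF_val, hiF_val, hne, if_false]
  · rw [blockDiag2_hi_lo]
    have hlt : (b:ℕ) / 2^(s+1) < 2^m / 2^(s+1) :=
      Nat.div_lt_div_of_lt_of_dvd ⟨c, hc⟩ b.isLt
    have hge : 2^m / 2^(s+1) ≤ ((a:ℕ) + 2^m) / 2^(s+1) :=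
      Nat.div_le_div_right (by omega)
    have hne : ((a:ℕ) + 2^m) / 2^(s+1) ≠ (b:ℕ) / 2^(s+1) := by omega
    simp only [chwAux, loF_val, hiF_val, hne, if_false]
  · rw [blockDiag2_hi_hi]
    simp only [chwAux, loF_val, hiF_val, hc]
    simp only [Nat.add_mul_div_left _ _ hBpos, Nat.add_mul_mod_self_left,
      Nat.add_right_cancel_iff]

lemma dup_chw (m r : ℕ) (hr1 : 1 ≤ r) (hrm : r ≤ m) :
    blockDiag2 (chwFactor m r) (chwFactor m r) = chwFactor (m+1) (r+1) := by
  rw [chwFactor_eq_aux, chwFactor_eq_aux, dup_chwAux m (m - r) (by omega)]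
  rw [Nat.succ_sub_succ]

lemma prod_dup {m : ℕ} (L : List (Matrix (Fin (2^m)) (Fin (2^m)) ℝ)) :
    (L.map (fun X => blockDiag2 X X)).prod = blockDiag2 L.prod L.prod := by
  induction L with
  | nil => simp [blockDiag2_one]
  | cons X t ih => simp [ih, blockDiag2_mul]

lemma had_step {m : ℕ} (A : Matrix (Fin (2^m)) (Fin (2^m)) ℝ)
    (hA : A * Haar m = Had m) :
    blockDiag2 A (Had m) * Haar (m+1) = Had (m+1) := by
  funext i j
  rcases lo_or_hi m i with ⟨a, rfl⟩ | ⟨a, rfl⟩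
  · rw [mul_haar_lo, hA, Had_succ_lo]
  · rw [mul_haar_hi, Had_succ_hi]

end CHW
lemma had_one : Had 1 = Haar 1 := by
  funext i j
  have hi := i.isLt; have hj := j.isLt
  rw [Had, Haar]
  beta_reduce
  by_cases h : (i:ℕ) < 2^0
  · rw [dif_pos h, dif_pos h]
    rfl
  · rw [dif_neg h, dif_neg h]
    have h2 : (2:ℕ)^1 = 2 := rfl
    have h0 : (2:ℕ)^0 = 1 := rfl
    have e1 : (i:ℕ) - 2^0 = 0 := by omega
    have e2 : (j:ℕ)/2 = 0 := by omega
    have : Had 0 ⟨(i:ℕ) - 2^0, by omega⟩ ⟨(j:ℕ)/2, by omega⟩ = 1 := rfl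
    rw [this]
    rw [e1, e2]
    norm_num

/-- **CHW decomposition** (Theorem 1): for all `m ≥ 1`,
`H_m = (∏_{r=1}^{m-1} I_{r-1} ⊗ [[I_{m-r},0],[0,Ψ_{m-r}]]) · Ψ_m`,
where the product is `M_{m-1} ⋯ M_2 M_1`. -/
theorem chw_decomposition (m : ℕ) (hm : 1 ≤ m) :
    Had m = (((List.range (m - 1)).map fun k => chwFactor m (m - 1 - k)).prod) * Haar m := by
  induction m, hm using Nat.le_induction with
  | base => simp [had_one]
  | succ n hn ih =>
    obtain ⟨p, rfl⟩ : ∃ p, n = p + 1 := ⟨n - 1, by omega⟩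
    simp only [Nat.add_sub_cancel] at ih ⊢
    have e1 : (List.range (p+1)).map (fun k => chwFactor (p+1+1) (p+1-k))
        = ((List.range p).map (fun k =>
            blockDiag2 (chwFactor (p+1) (p-k)) (chwFactor (p+1) (p-k)))) ++ [idBlockHaar (p+1)] := by
      rw [List.range_succ, List.map_append]
      congr 1
      · apply List.map_congr_left
        intro k hk
        have hk' : k < p := List.mem_range.mp hk
        have e : p + 1 - k = (p - k) + 1 := by omega
        rw [e, ← dup_chw (p+1) (p-k) (by omega) (by omega)]
      · have e : p + 1 - p = 1 := by omega
        simp only [List.map_cons, List.map_nil, e, chwFactor_one]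
    rw [e1, List.prod_append, List.prod_singleton]
    have e2 : ((List.range p).map (fun k =>
        blockDiag2 (chwFactor (p+1) (p-k)) (chwFactor (p+1) (p-k)))).prod
        = blockDiag2 (((List.range p).map (fun k => chwFactor (p+1) (p-k))).prod)
                     (((List.range p).map (fun k => chwFactor (p+1) (p-k))).prod) := by
      rw [show (fun k => blockDiag2 (chwFactor (p+1) (p-k)) (chwFactor (p+1) (p-k)))
          = (fun X => blockDiag2 X X) ∘ (fun k => chwFactor (p+1) (p-k)) from rfl,
        ← List.map_map, prod_dup]
    rw [e2, idBlockHaar_eq, blockDiag2_mul, mul_one, ← ih]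
    exact (had_step _ ih.symm).symm
end

section
/- For all m ≥ 1, H_m · Ψ_mᵀ is the block diagonal matrix diag(1, H_0, H_1, …, H_{m-1}), where the block H_k occupies rows and columns indexed 2^k … 2^{k+1}−1 (0-indexed). -/
open Matrix

/-- The block diagonal matrix `diag(1, H_0, H_1, …, H_{m-1})` of size `2^m`, where for `k ≥ 0`
the block `H_k` occupies rows and columns `2^k, …, 2^(k+1) - 1` (0-indexed).  For a nonzero
index `i`, the block containing it is `k = Nat.log 2 i`, i.e. `2^k ≤ i < 2^(k+1)`. -/
noncomputable def haarWalshDiag (m : ℕ) : Matrix (Fin (2 ^ m)) (Fin (2 ^ m)) ℝ :=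
  fun i j =>
    if hi : (i : ℕ) = 0 then (if (j : ℕ) = 0 then 1 else 0)
    else if hj : (j : ℕ) = 0 then 0
    else if hk : Nat.log 2 (j : ℕ) = Nat.log 2 (i : ℕ) then
      Had (Nat.log 2 (i : ℕ))
        ⟨(i : ℕ) - 2 ^ Nat.log 2 (i : ℕ), by
          have h1 : 2 ^ Nat.log 2 (i : ℕ) ≤ (i : ℕ) := Nat.pow_log_le_self 2 hi
          have h2 : (i : ℕ) < 2 ^ (Nat.log 2 (i : ℕ) + 1) :=
            Nat.lt_pow_succ_log_self (by norm_num) _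
          have h3 : (2 : ℕ) ^ (Nat.log 2 (i : ℕ) + 1) = 2 ^ Nat.log 2 (i : ℕ) * 2 :=
            pow_succ 2 _
          omega⟩
        ⟨(j : ℕ) - 2 ^ Nat.log 2 (i : ℕ), by
          have h1 : 2 ^ Nat.log 2 (j : ℕ) ≤ (j : ℕ) := Nat.pow_log_le_self 2 hj
          have h2 : (j : ℕ) < 2 ^ (Nat.log 2 (j : ℕ) + 1) :=
            Nat.lt_pow_succ_log_self (by norm_num) _
          rw [hk] at h1 h2
          have h3 : (2 : ℕ) ^ (Nat.log 2 (i : ℕ) + 1) = 2 ^ Nat.log 2 (i : ℕ) * 2 :=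
            pow_succ 2 _
          omega⟩
    else 0

private lemma hw_sum_pair_range (n : ℕ) (g : ℕ → ℝ) :
    ∑ k ∈ Finset.range (2 * n), g k
      = ∑ q ∈ Finset.range n, (g (2 * q) + g (2 * q + 1)) := by
  induction n with
  | zero => simp
  | succ n ih =>
      have h : 2 * (n + 1) = (2 * n + 1) + 1 := by ring
      rw [h, Finset.sum_range_succ, Finset.sum_range_succ, Finset.sum_range_succ, ih]
      ring

private lemma hw_pow_succ' (m : ℕ) : (2 : ℕ) ^ (m + 1) = 2 * 2 ^ m := by
  rw [pow_succ]; ring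

private lemma hw_fin_sum_pair (m : ℕ) (F : Fin (2 ^ (m + 1)) → ℝ) :
    ∑ k, F k = ∑ q : Fin (2 ^ m),
      (F ⟨2 * q, by have := q.isLt; have h := hw_pow_succ' m; omega⟩
        + F ⟨2 * q + 1, by have := q.isLt; have h := hw_pow_succ' m; omega⟩) := by
  set g : ℕ → ℝ := fun k => if h : k < 2 ^ (m + 1) then F ⟨k, h⟩ else 0 with hg
  calc ∑ k, F k = ∑ k : Fin (2 ^ (m + 1)), g ↑k := by
        refine Finset.sum_congr rfl fun k _ => ?_
        simp [hg, k.isLt]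
    _ = ∑ k ∈ Finset.range (2 ^ (m + 1)), g k := Fin.sum_univ_eq_sum_range g _
    _ = ∑ k ∈ Finset.range (2 * 2 ^ m), g k := by rw [hw_pow_succ']
    _ = ∑ q ∈ Finset.range (2 ^ m), (g (2 * q) + g (2 * q + 1)) := hw_sum_pair_range _ g
    _ = ∑ q : Fin (2 ^ m), (g (2 * ↑q) + g (2 * ↑q + 1)) :=
        (Fin.sum_univ_eq_sum_range (fun q => g (2 * q) + g (2 * q + 1)) _).symm
    _ = _ := by
        refine Finset.sum_congr rfl fun q _ => ?_
        have h1 : 2 * (q : ℕ) < 2 ^ (m + 1) := by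
          have := q.isLt; have h := hw_pow_succ' m; omega
        have h2 : 2 * (q : ℕ) + 1 < 2 ^ (m + 1) := by
          have := q.isLt; have h := hw_pow_succ' m; omega
        simp only [hg]
        rw [dif_pos h1, dif_pos h2]

private lemma Had_congr {a b : ℕ} (h : a = b) (x y : Fin (2 ^ a)) :
    Had a x y = Had b ⟨x, h ▸ x.isLt⟩ ⟨y, h ▸ y.isLt⟩ := by subst h; rfl

private lemma hw_log_lt {m i : ℕ} (h0 : i ≠ 0) (h : i < 2 ^ m) : Nat.log 2 i < m := by
  have h1 : 2 ^ Nat.log 2 i ≤ i := Nat.pow_log_le_self 2 h0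
  by_contra hc
  have : (2:ℕ) ^ m ≤ 2 ^ Nat.log 2 i := Nat.pow_le_pow_right (by norm_num) (by omega)
  omega

private lemma hw_log_eq {m j : ℕ} (h1 : 2 ^ m ≤ j) (h2 : j < 2 ^ (m + 1)) :
    Nat.log 2 j = m :=
  Nat.log_eq_of_pow_le_of_lt_pow h1 h2

private lemma haarWalshDiag_low {m : ℕ} (i j : Fin (2 ^ (m + 1)))
    (hi : (i : ℕ) < 2 ^ m) (hj : (j : ℕ) < 2 ^ m) :
    haarWalshDiag (m + 1) i j = haarWalshDiag m ⟨i, hi⟩ ⟨j, hj⟩ := rfl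

private lemma haarWalshDiag_lowhigh {m : ℕ} (i j : Fin (2 ^ (m + 1)))
    (hi : (i : ℕ) < 2 ^ m) (hj : 2 ^ m ≤ (j : ℕ)) :
    haarWalshDiag (m + 1) i j = 0 := by
  have h2m : (0:ℕ) < 2 ^ m := Nat.pow_pos (by norm_num)
  have hj0 : (j : ℕ) ≠ 0 := by omega
  unfold haarWalshDiag
  rcases eq_or_ne (i : ℕ) 0 with h0 | h0
  · simp [h0, hj0]
  · have hlj : Nat.log 2 (j : ℕ) = m := hw_log_eq hj j.isLt
    have hli : Nat.log 2 (i : ℕ) < m := hw_log_lt h0 hi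
    rw [dif_neg h0, dif_neg hj0, dif_neg (by omega)]

private lemma haarWalshDiag_highlow {m : ℕ} (i j : Fin (2 ^ (m + 1)))
    (hi : 2 ^ m ≤ (i : ℕ)) (hj : (j : ℕ) < 2 ^ m) :
    haarWalshDiag (m + 1) i j = 0 := by
  have h2m : (0:ℕ) < 2 ^ m := Nat.pow_pos (by norm_num)
  have hi0 : (i : ℕ) ≠ 0 := by omega
  unfold haarWalshDiag
  rcases eq_or_ne (j : ℕ) 0 with h0 | h0
  · simp [h0, hi0]
  · have hli : Nat.log 2 (i : ℕ) = m := hw_log_eq hi i.isLt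
    have hlj : Nat.log 2 (j : ℕ) < m := hw_log_lt h0 hj
    rw [dif_neg hi0, dif_neg h0, dif_neg (by omega)]

private lemma haarWalshDiag_high {m : ℕ} (i j : Fin (2 ^ (m + 1)))
    (hi : 2 ^ m ≤ (i : ℕ)) (hj : 2 ^ m ≤ (j : ℕ)) :
    haarWalshDiag (m + 1) i j
      = Had m ⟨(i : ℕ) - 2 ^ m, by have := i.isLt; have h := hw_pow_succ' m; omega⟩
              ⟨(j : ℕ) - 2 ^ m, by have := j.isLt; have h := hw_pow_succ' m; omega⟩ := by
  have h2m : (0:ℕ) < 2 ^ m := Nat.pow_pos (by norm_num)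
  have hi0 : (i : ℕ) ≠ 0 := by omega
  have hj0 : (j : ℕ) ≠ 0 := by omega
  have hli : Nat.log 2 (i : ℕ) = m := hw_log_eq hi i.isLt
  have hlj : Nat.log 2 (j : ℕ) = m := hw_log_eq hj j.isLt
  unfold haarWalshDiag
  rw [dif_neg hi0, dif_neg hj0, dif_pos (by omega)]
  rw [Had_congr hli]
  congr 1 <;> (apply Fin.ext; simp [hli])

private lemma hw_c_mul : (1 / Real.sqrt 2) * (1 / Real.sqrt 2) = 1 / 2 := by
  rw [div_mul_div_comm, one_mul, Real.mul_self_sqrt (by norm_num)]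

private lemma hw_key : ∀ m, Had m * (Haar m)ᵀ = haarWalshDiag m := by
  intro m
  induction m with
  | zero =>
      ext i j
      have hi : (i : ℕ) = 0 := by have := i.isLt; simp at this; omega
      have hj : (j : ℕ) = 0 := by have := j.isLt; simp at this; omega
      rw [Matrix.mul_apply]
      simp [Had, Haar, haarWalshDiag, hi, hj, Matrix.transpose_apply]
      rfl
  | succ m ih =>
      ext i j
      rw [Matrix.mul_apply]
      simp only [Matrix.transpose_apply]
      rw [hw_fin_sum_pair m (fun k => Had (m + 1) i k * Haar (m + 1) j k)]
      have hin : (i : ℕ) - 2 ^ m < 2 ^ m := by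
        have := i.isLt; have := hw_pow_succ' m; omega
      have hjn : (j : ℕ) - 2 ^ m < 2 ^ m := by
        have := j.isLt; have := hw_pow_succ' m; omega
      by_cases hi : (i : ℕ) < 2 ^ m <;> by_cases hj : (j : ℕ) < 2 ^ m
      · -- both low
        rw [haarWalshDiag_low i j hi hj, ← ih, Matrix.mul_apply]
        refine Finset.sum_congr rfl fun q _ => ?_
        simp only [Matrix.transpose_apply]
        have e1 : 2 * (q : ℕ) / 2 = q := by omega
        have e2 : (2 * (q : ℕ) + 1) / 2 = q := by omega
        have e3 : 2 * (q : ℕ) % 2 = 0 := by omega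
        have e4 : (2 * (q : ℕ) + 1) % 2 = 1 := by omega
        simp only [Had, Haar, Fin.val_mk, e1, e2, e3, e4, Fin.eta, hi, hj, dite_true,
          if_true, dif_pos]
        linear_combination 2 * Had m ⟨↑i, hi⟩ q * Haar m ⟨↑j, hj⟩ q * hw_c_mul
      · -- i low, j high
        rw [haarWalshDiag_lowhigh i j hi (le_of_not_gt hj)]
        refine Finset.sum_eq_zero fun q _ => ?_
        have e1 : 2 * (q : ℕ) / 2 = q := by omega
        have e2 : (2 * (q : ℕ) + 1) / 2 = q := by omega
        have e3 : 2 * (q : ℕ) % 2 = 0 := by omega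
        have e4 : (2 * (q : ℕ) + 1) % 2 = 1 := by omega
        simp only [Had, Haar, Fin.val_mk, e1, e2, e3, e4, Fin.eta, hi, hj, dite_true,
          dite_false, if_true, reduceIte, one_ne_zero]
        ring
      · -- i high, j low
        rw [haarWalshDiag_highlow i j (le_of_not_gt hi) hj]
        refine Finset.sum_eq_zero fun q _ => ?_
        have e1 : 2 * (q : ℕ) / 2 = q := by omega
        have e2 : (2 * (q : ℕ) + 1) / 2 = q := by omega
        have e3 : 2 * (q : ℕ) % 2 = 0 := by omega
        have e4 : (2 * (q : ℕ) + 1) % 2 = 1 := by omega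
        simp only [Had, Haar, Fin.val_mk, e1, e2, e3, e4, Fin.eta, hi, hj, dite_true,
          dite_false, if_true, reduceIte, one_ne_zero]
        ring
      · -- both high
        rw [haarWalshDiag_high i j (le_of_not_gt hi) (le_of_not_gt hj)]
        trans (∑ q : Fin (2 ^ m),
          if (⟨(j : ℕ) - 2 ^ m, hjn⟩ : Fin (2 ^ m)) = q then
            Had m ⟨(i : ℕ) - 2 ^ m, hin⟩ q else 0)
        · refine Finset.sum_congr rfl fun q _ => ?_
          have e1 : 2 * (q : ℕ) / 2 = q := by omega
          have e2 : (2 * (q : ℕ) + 1) / 2 = q := by omega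
          have e3 : 2 * (q : ℕ) % 2 = 0 := by omega
          have e4 : (2 * (q : ℕ) + 1) % 2 = 1 := by omega
          simp only [Had, Haar, Fin.val_mk, e1, e2, e3, e4, Fin.eta, hi, hj, dite_true,
            dite_false, if_true, reduceIte, one_ne_zero]
          by_cases hbq : (j : ℕ) - 2 ^ m = (q : ℕ)
          · rw [if_pos hbq, if_pos (Fin.ext hbq : (⟨(j : ℕ) - 2 ^ m, hjn⟩ : Fin (2 ^ m)) = q)]
            linear_combination 2 * Had m ⟨(i : ℕ) - 2 ^ m, hin⟩ q * hw_c_mul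
          · rw [if_neg hbq, if_neg
              (fun h => hbq (congrArg Fin.val h) :
                ¬ (⟨(j : ℕ) - 2 ^ m, hjn⟩ : Fin (2 ^ m)) = q)]
            ring
        · rw [Finset.sum_ite_eq]
          simp

/-- For all `m ≥ 1`, `H_m · Ψ_mᵀ` is the block diagonal matrix
`diag(1, H_0, H_1, …, H_{m-1})`, the block `H_k` occupying rows and columns
`2^k, …, 2^(k+1) - 1`. -/
theorem haar_walsh_block_diagonal (m : ℕ) (hm : 1 ≤ m) :
    Had m * (Haar m)ᵀ = haarWalshDiag m := by
  exact hw_key m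
end

section
/- For all m ≥ 1, the matrix H_m·Ψ_mᵀ satisfies the recursion H_{m+1}·Ψ_{m+1}ᵀ = [[H_m·Ψ_mᵀ, 0],[0, H_m]] (block diagonal with the previous Haar–Walsh matrix in the top-left and H_m in the bottom-right). -/
open Matrix

def e2 (m : ℕ) : Fin (2^m) × Fin 2 ≃ Fin (2^(m+1)) :=
  finProdFinEquiv.trans (finCongr (pow_succ 2 m).symm)

lemma e2_val (m : ℕ) (a : Fin (2^m)) (b : Fin 2) : ((e2 m (a,b)) : ℕ) = (b : ℕ) + 2*a := rfl

lemma e2_div (m : ℕ) (a : Fin (2^m)) (b : Fin 2) : ((e2 m (a,b)) : ℕ) / 2 = a := by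
  rw [e2_val]
  omega

lemma e2_mod (m : ℕ) (a : Fin (2^m)) (b : Fin 2) : ((e2 m (a,b)) : ℕ) % 2 = b := by
  rw [e2_val]
  omega

lemma symm_lt (m : ℕ) (h : 2^m + 2^m = 2^(m+1)) (i : Fin (2^(m+1))) (hi : (i:ℕ) < 2^m) :
    (finSumFinEquiv.trans (finCongr h)).symm i = Sum.inl ⟨i, hi⟩ := by
  rw [Equiv.symm_apply_eq]
  apply Fin.ext
  simp

lemma symm_ge (m : ℕ) (h : 2^m + 2^m = 2^(m+1)) (i : Fin (2^(m+1)))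
    (hi : ¬ (i:ℕ) < 2^m) :
    (finSumFinEquiv.trans (finCongr h)).symm i
      = Sum.inr ⟨(i:ℕ) - 2^m, by have := i.isLt; omega⟩ := by
  rw [Equiv.symm_apply_eq]
  apply Fin.ext
  simp [finSumFinEquiv]
  omega

/-- The Haar–Walsh matrix recursion: for all `m ≥ 1`,
`H_{m+1} · Ψ_{m+1}ᵀ = [[H_m · Ψ_mᵀ, 0], [0, H_m]]` (block diagonal). -/
theorem haar_walsh_recursion (m : ℕ) (hm : 1 ≤ m) :
    Had (m + 1) * (Haar (m + 1))ᵀ =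
      Matrix.reindex
        (finSumFinEquiv.trans (finCongr (by rw [← two_mul, ← pow_succ'])))
        (finSumFinEquiv.trans (finCongr (by rw [← two_mul, ← pow_succ'])))
        (Matrix.fromBlocks (Had m * (Haar m)ᵀ) 0 0 (Had m)) := by
  have hc : (1 / Real.sqrt 2) * (1 / Real.sqrt 2) = 1/2 := by
    rw [div_mul_div_comm, Real.mul_self_sqrt (by norm_num)]
    norm_num
  ext i k
  rw [Matrix.reindex_apply, Matrix.submatrix_apply, Matrix.mul_apply]
  simp only [transpose_apply]
  rw [← Equiv.sum_comp (e2 m) (fun j => Had (m+1) i j * Haar (m+1) k j),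
    Fintype.sum_prod_type]
  simp only [Fin.sum_univ_two]
  simp only [Had, Haar, e2_div, e2_mod, Fin.eta]
  by_cases hi : (i : ℕ) < 2^m <;> by_cases hk : (k : ℕ) < 2^m
  · rw [symm_lt m _ i hi, symm_lt m _ k hk, Matrix.fromBlocks_apply₁₁, Matrix.mul_apply]
    simp only [dif_pos hi, dif_pos hk, transpose_apply]
    apply Finset.sum_congr rfl
    intro a _
    rw [mul_mul_mul_comm, hc]
    ring
  · rw [symm_lt m _ i hi, symm_ge m _ k hk, Matrix.fromBlocks_apply₁₂]
    simp only [dif_pos hi, dif_neg hk]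
    norm_num
  · rw [symm_ge m _ i hi, symm_lt m _ k hk, Matrix.fromBlocks_apply₂₁]
    simp only [dif_neg hi, dif_pos hk]
    norm_num
  · rw [symm_ge m _ i hi, symm_ge m _ k hk, Matrix.fromBlocks_apply₂₂]
    simp only [dif_neg hi, dif_neg hk]
    norm_num
    have hk2 : (k:ℕ) - 2^m < 2^m := by
      have := k.isLt; have h2 : (2:ℕ)^(m+1) = 2^m*2 := pow_succ 2 m; omega
    have hi2 : (i:ℕ) - 2^m < 2^m := by
      have := i.isLt; have h2 : (2:ℕ)^(m+1) = 2^m*2 := pow_succ 2 m; omega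
    have hc' : (Real.sqrt 2)⁻¹ * (Real.sqrt 2)⁻¹ = 1/2 := by
      rw [inv_eq_one_div]; exact hc
    have step : ∀ x : Fin (2^m),
        ((if (k:ℕ) - 2 ^ m = (x:ℕ) then
            (Real.sqrt 2)⁻¹ * Had m ⟨(i:ℕ) - 2 ^ m, hi2⟩ x * (Real.sqrt 2)⁻¹ else 0) +
          -if (k:ℕ) - 2 ^ m = (x:ℕ) then
            -((Real.sqrt 2)⁻¹ * Had m ⟨(i:ℕ) - 2 ^ m, hi2⟩ x * (Real.sqrt 2)⁻¹) else 0)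
        = if (⟨(k:ℕ)-2^m, hk2⟩ : Fin (2^m)) = x then Had m ⟨(i:ℕ)-2^m, hi2⟩ x else 0 := by
      intro x
      by_cases h : (k:ℕ) - 2^m = (x:ℕ)
      · rw [if_pos h, if_pos h, if_pos (Fin.ext h)]
        linear_combination (2 * Had m ⟨(i:ℕ)-2^m, hi2⟩ x) * hc'
      · rw [if_neg h, if_neg h, if_neg (fun hh => h (congrArg Fin.val hh))]
        ring
    rw [Finset.sum_congr rfl (fun x _ => step x), Finset.sum_ite_eq]
    simp
end
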